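/- Let A, B, C be types and let R₁ ⊆ B × C, R₂ ⊆ A × C, R₃ ⊆ A × B be finite sets. Define the triangle join T = {(a,b,c) ∈ A × B × C : (b,c) ∈ R₁ ∧ (a,c) ∈ R₂ ∧ (a,b) ∈ R₃}. Then |T| ≤ √(|R₁| · |R₂| · |R₃|). -/

import Mathlib

lemma fiber_sum_le {α ι : Type*} [DecidableEq ι] (R : Finset α) (k : α → ι) (S : Finset ι) :
    ∑ a ∈ S, (R.filter (fun q => k q = a)).card ≤ R.card := by
  classical
  have h : ∑ a ∈ S, ((R.filter (fun q => k q ∈ S)).filter (fun q => k q = a)).card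
      = (R.filter (fun q => k q ∈ S)).card :=
    (Finset.card_eq_sum_card_fiberwise (f := k)
      (fun x hx => (Finset.mem_filter.1 hx).2)).symm
  calc ∑ a ∈ S, (R.filter (fun q => k q = a)).card
      = ∑ a ∈ S, ((R.filter (fun q => k q ∈ S)).filter (fun q => k q = a)).card := by
        apply Finset.sum_congr rfl
        intro a ha
        congr 1
        ext q
        simp only [Finset.mem_filter]
        constructor
        · rintro ⟨hq, hk⟩; exact ⟨⟨hq, hk ▸ ha⟩, hk⟩
        · rintro ⟨⟨hq, _⟩, hk⟩; exact ⟨hq, hk⟩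
    _ = (R.filter (fun q => k q ∈ S)).card := h
    _ ≤ R.card := Finset.card_le_card (Finset.filter_subset _ _)

theorem triangle_join_agm {A B C : Type*}
    (R₁ : Finset (B × C)) (R₂ : Finset (A × C)) (R₃ : Finset (A × B)) :
    let T : Set (A × B × C) :=
      {p | (p.2.1, p.2.2) ∈ R₁ ∧ (p.1, p.2.2) ∈ R₂ ∧ (p.1, p.2.1) ∈ R₃}
    T.Finite ∧
      (T.ncard : ℝ) ≤ Real.sqrt ((R₁.card : ℝ) * R₂.card * R₃.card) := by
  classical
  intro T
  set F : Finset (A × B × C) :=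
    ((R₂ ×ˢ R₃).image fun p => (p.1.1, p.2.2, p.1.2)).filter
      (fun p => (p.2.1, p.2.2) ∈ R₁ ∧ (p.1, p.2.2) ∈ R₂ ∧ (p.1, p.2.1) ∈ R₃) with hF
  have hTF : T = ↑F := by
    ext p
    simp only [T, Set.mem_setOf_eq, hF, Finset.coe_filter, Finset.mem_image,
      Finset.mem_product, Set.mem_setOf_eq]
    constructor
    · rintro ⟨h1, h2, h3⟩
      exact ⟨⟨((p.1, p.2.2), (p.1, p.2.1)), ⟨h2, h3⟩, rfl⟩, h1, h2, h3⟩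
    · rintro ⟨_, h⟩; exact h
  have hfin : T.Finite := hTF ▸ F.finite_toSet
  refine ⟨hfin, ?_⟩
  have hcard : T.ncard = F.card := by rw [hTF, Set.ncard_coe_finset]
  rw [hcard]
  set S : Finset A := F.image (fun p => p.1) with hS
  set sl : A → Finset (A × B × C) := fun a => F.filter (fun p => p.1 = a) with hsl
  set f : A → ℕ := fun a => (R₂.filter (fun q => q.1 = a)).card with hf
  set g : A → ℕ := fun a => (R₃.filter (fun q => q.1 = a)).card with hg
  have hFsum : F.card = ∑ a ∈ S, (sl a).card :=
    Finset.card_eq_sum_card_fiberwise (fun x hx => Finset.mem_image_of_mem _ hx)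
  have hsl1 : ∀ a, (sl a).card ≤ R₁.card := by
    intro a
    apply Finset.card_le_card_of_injOn (fun p => (p.2.1, p.2.2))
    · intro p hp
      simp only [hsl, Finset.mem_coe, Finset.mem_filter, hF] at hp
      exact hp.1.2.1
    · intro p hp q hq h
      simp only [hsl, Finset.mem_coe, Finset.mem_filter] at hp hq
      have h2 : p.2 = q.2 :=
        Prod.ext (congrArg Prod.fst h) (congrArg Prod.snd h)
      exact Prod.ext (hp.2.trans hq.2.symm) h2
  have hsl2 : ∀ a, (sl a).card ≤ f a * g a := by
    intro a
    have := Finset.card_le_card_of_injOn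
      (f := fun p : A × B × C => ((p.1, p.2.2), (p.1, p.2.1)))
      (s := sl a) (t := (R₂.filter (fun q => q.1 = a)) ×ˢ (R₃.filter (fun q => q.1 = a)))
      (by
        intro p hp
        simp only [hsl, Finset.mem_coe, Finset.mem_filter, hF] at hp
        simp only [Finset.mem_coe, Finset.mem_product, Finset.mem_filter]
        exact ⟨⟨hp.1.2.2.1, hp.2⟩, hp.1.2.2.2, hp.2⟩)
      (by
        intro p hp q hq h
        simp only [Prod.mk.injEq] at h
        obtain ⟨⟨h1, h2⟩, _, h3⟩ := h
        exact Prod.ext h1 (Prod.ext h3 h2))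
    simpa [Finset.card_product, hf, hg] using this
  have key : ∀ a, ((sl a).card : ℝ) ≤
      Real.sqrt (R₁.card) * Real.sqrt ((f a : ℝ) * (g a : ℝ)) := by
    intro a
    rw [← Real.sqrt_mul (Nat.cast_nonneg _)]
    rw [show ((sl a).card : ℝ) = Real.sqrt (((sl a).card : ℝ) ^ 2) by
      rw [Real.sqrt_sq (Nat.cast_nonneg _)]]
    apply Real.sqrt_le_sqrt
    rw [sq]
    have hmul : (sl a).card * (sl a).card ≤ R₁.card * (f a * g a) :=
      Nat.mul_le_mul (hsl1 a) (hsl2 a)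
    push_cast
    exact_mod_cast hmul
  have hsumf : ∑ a ∈ S, (f a : ℝ) ≤ (R₂.card : ℝ) := by
    exact_mod_cast Nat.cast_le.2 (by exact_mod_cast fiber_sum_le R₂ Prod.fst S)
  have hsumg : ∑ a ∈ S, (g a : ℝ) ≤ (R₃.card : ℝ) := by
    exact_mod_cast Nat.cast_le.2 (by exact_mod_cast fiber_sum_le R₃ Prod.fst S)
  -- Cauchy–Schwarz
  have hCS : ∑ a ∈ S, Real.sqrt ((f a : ℝ) * (g a : ℝ)) ≤
      Real.sqrt ((∑ a ∈ S, (f a : ℝ)) * ∑ a ∈ S, (g a : ℝ)) := by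
    rw [show (∑ a ∈ S, Real.sqrt ((f a : ℝ) * (g a : ℝ))) =
        Real.sqrt ((∑ a ∈ S, Real.sqrt ((f a : ℝ) * (g a : ℝ))) ^ 2) from
      (Real.sqrt_sq (Finset.sum_nonneg fun _ _ => Real.sqrt_nonneg _)).symm]
    apply Real.sqrt_le_sqrt
    exact Finset.sum_sq_le_sum_mul_sum_of_sq_eq_mul S
      (fun i _ => Nat.cast_nonneg _) (fun i _ => Nat.cast_nonneg _)
      (fun i _ => Real.sq_sqrt (mul_nonneg (Nat.cast_nonneg _) (Nat.cast_nonneg _)))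
  calc (F.card : ℝ)
      = ∑ a ∈ S, ((sl a).card : ℝ) := by rw [hFsum]; push_cast; ring
    _ ≤ ∑ a ∈ S, Real.sqrt (R₁.card) * Real.sqrt ((f a : ℝ) * (g a : ℝ)) :=
        Finset.sum_le_sum fun a _ => key a
    _ = Real.sqrt (R₁.card) * ∑ a ∈ S, Real.sqrt ((f a : ℝ) * (g a : ℝ)) := by
        rw [Finset.mul_sum]
    _ ≤ Real.sqrt (R₁.card) *
        Real.sqrt ((∑ a ∈ S, (f a : ℝ)) * ∑ a ∈ S, (g a : ℝ)) := by
        exact mul_le_mul_of_nonneg_left hCS (Real.sqrt_nonneg _)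
    _ ≤ Real.sqrt (R₁.card) * Real.sqrt ((R₂.card : ℝ) * R₃.card) := by
        apply mul_le_mul_of_nonneg_left _ (Real.sqrt_nonneg _)
        apply Real.sqrt_le_sqrt
        exact mul_le_mul hsumf hsumg
          (Finset.sum_nonneg fun _ _ => Nat.cast_nonneg _) (Nat.cast_nonneg _)
    _ = Real.sqrt ((R₁.card : ℝ) * R₂.card * R₃.card) := by
        rw [← Real.sqrt_mul (Nat.cast_nonneg _), mul_assoc]
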